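/- If an objective W ⊆ C^ω is half-positional over finite one-player arenas and is ω-regular, then its prefix preorder is total: for all finite words w₁, w₂, either every winning continuation of w₁ is a winning continuation of w₂, or vice versa. -/

import Mathlib

/-- Concatenate a finite word in front of an infinite word. -/
def extWord {C : Type} (w : List C) (s : ℕ → C) : ℕ → C :=
  fun n => if h : n < w.length then w.get ⟨n, h⟩ else s (n - w.length)

/-- Winning continuations `w⁻¹W` of a finite word `w` w.r.t. objective `W`. -/
def winCont {C : Type} (W : Set (ℕ → C)) (w : List C) : Set (ℕ → C) :=
  {s | extWord w s ∈ W}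

/-- Acceptance by a nondeterministic Büchi automaton (transition-based). -/
def NBAAccepts {C Q : Type} (init : Set Q) (Δ : Q → C → Q → Prop)
    (acc : Q → C → Q → Prop) (s : ℕ → C) : Prop :=
  ∃ ρ : ℕ → Q, ρ 0 ∈ init ∧ (∀ n, Δ (ρ n) (s n) (ρ (n + 1))) ∧
    ∀ N, ∃ n ≥ N, acc (ρ n) (s n) (ρ (n + 1))

/-- An objective is ω-regular if it is recognized by some nondeterministic Büchi automaton. -/
def OmegaRegular {C : Type} (W : Set (ℕ → C)) : Prop :=
  ∃ (Q : Type) (_ : Fintype Q) (init : Set Q) (Δ acc : Q → C → Q → Prop),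
    (∀ q c q', acc q c q' → Δ q c q') ∧ W = {s | NBAAccepts init Δ acc s}

universe u

/-- An infinite play in an arena with edge set `E`. -/
def IsPlay {C : Type} {V : Type u} (E : Set (V × C × V)) (p : ℕ → V) (col : ℕ → C) : Prop :=
  ∀ n, (p n, col n, p (n + 1)) ∈ E

/-- A strategy of Player 1: from a history and the current vertex, choose a colored edge. -/
def Strat (C : Type) (V : Type u) : Type u := List (V × C) → V → C × V

/-- The history (sequence of visited vertices with emitted colors) after `n` steps. -/
def histPref {C : Type} {V : Type u} (p : ℕ → V) (col : ℕ → C) (n : ℕ) : List (V × C) :=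
  (List.range n).map fun i => (p i, col i)

/-- A strategy is valid if it always picks actual edges at Player-1 vertices. -/
def ValidStrat {C : Type} {V : Type u} (E : Set (V × C × V)) (own1 : V → Prop)
    (σ : Strat C V) : Prop :=
  ∀ h v, own1 v → (v, (σ h v).1, (σ h v).2) ∈ E

/-- A play is consistent with strategy `σ` if `σ`'s choices are followed at Player-1 vertices. -/
def ConsistentPlay {C : Type} {V : Type u} (own1 : V → Prop) (σ : Strat C V)
    (p : ℕ → V) (col : ℕ → C) : Prop :=
  ∀ n, own1 (p n) → (col n, p (n + 1)) = σ (histPref p col n) (p n)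

/-- `σ` is winning from `v` for objective `W`. -/
def WinningFrom {C : Type} {V : Type u} (W : Set (ℕ → C)) (E : Set (V × C × V))
    (own1 : V → Prop) (σ : Strat C V) (v : V) : Prop :=
  ∀ p col, IsPlay E p col → p 0 = v → ConsistentPlay own1 σ p col → col ∈ W

/-- A positional strategy only depends on the current vertex. -/
def PositionalStrat {C : Type} {V : Type u} (σ : Strat C V) : Prop :=
  ∀ h h' v, σ h v = σ h' v

/-- Player 1 has a single positional strategy, optimal in the arena `(E, own1)`. -/
def HalfPosArena {C : Type} {V : Type u} (W : Set (ℕ → C)) (E : Set (V × C × V))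
    (own1 : V → Prop) : Prop :=
  ∃ σ : Strat C V, ValidStrat E own1 σ ∧ PositionalStrat σ ∧
    ∀ v, (∃ τ : Strat C V, ValidStrat E own1 τ ∧ WinningFrom W E own1 τ v) →
      WinningFrom W E own1 σ v

/-- Half-positionality over all (non-blocking) arenas of any cardinality. -/
def HalfPositionalAll {C : Type} (W : Set (ℕ → C)) : Prop :=
  ∀ (V : Type u) (E : Set (V × C × V)) (own1 : V → Prop),
    (∀ v, ∃ c v', (v, c, v') ∈ E) → HalfPosArena W E own1

/-- Half-positionality over finite one-player (all vertices to Player 1) arenas. -/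
def HalfPosFinOnePlayer {C : Type} (W : Set (ℕ → C)) : Prop :=
  ∀ (V : Type) [Fintype V] (E : Set (V × C × V)),
    (∀ v, ∃ c v', (v, c, v') ∈ E) → HalfPosArena W E (fun _ => True)


namespace Stmt7Aux




lemma pigeon_set {F : Type*} [Finite F] {S : Set ℕ} (hS : S.Infinite) (f : ℕ → F) :
    ∃ y, {n | n ∈ S ∧ f n = y}.Infinite := by
  by_contra h
  push_neg at h
  apply hS
  have hsub : S ⊆ ⋃ y ∈ (Set.univ : Set F), {n | n ∈ S ∧ f n = y} := by
    intro n hn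
    simp only [Set.mem_iUnion, Set.mem_setOf_eq, Set.mem_univ, exists_prop]
    exact ⟨f n, trivial, hn, rfl⟩
  exact ((Set.finite_univ).biUnion fun y _ => h y).subset hsub

lemma ramsey_step {F : Type*} [Finite F] (c : ℕ → ℕ → F) (S : Set ℕ) (hS : S.Infinite) :
    ∃ a ∈ S, ∃ y : F, {n | n ∈ S ∧ a < n ∧ c a n = y}.Infinite := by
  obtain ⟨a, ha⟩ := hS.nonempty
  have h2 : {n | n ∈ S ∧ a < n}.Infinite := by
    have he : {n | n ∈ S ∧ a < n} = S \ Set.Iic a := by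
      ext n
      simp only [Set.mem_setOf_eq, Set.mem_diff, Set.mem_Iic, not_le]
    rw [he]; exact hS.diff (Set.finite_Iic a)
  obtain ⟨y, hy⟩ := pigeon_set h2 (c a)
  refine ⟨a, ha, y, ?_⟩
  convert hy using 1
  ext n; simp only [Set.mem_setOf_eq]; tauto

theorem ramsey_pairs {F : Type*} [Finite F] (c : ℕ → ℕ → F) :
    ∃ g : ℕ → ℕ, StrictMono g ∧ ∃ e : F, ∀ i j, i < j → c (g i) (g j) = e := by
  classical
  -- iterated step
  let T : ℕ → {S : Set ℕ // S.Infinite} := fun k =>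
    Nat.rec ⟨Set.univ, Set.infinite_univ⟩
      (fun _ P =>
        ⟨{n | n ∈ P.1 ∧ (ramsey_step c P.1 P.2).choose < n ∧
            c (ramsey_step c P.1 P.2).choose n
              = (ramsey_step c P.1 P.2).choose_spec.2.choose},
         (ramsey_step c P.1 P.2).choose_spec.2.choose_spec⟩) k
  let a : ℕ → ℕ := fun k => (ramsey_step c (T k).1 (T k).2).choose
  let d : ℕ → F := fun k => (ramsey_step c (T k).1 (T k).2).choose_spec.2.choose
  have hmem : ∀ k, a k ∈ (T k).1 := fun k => (ramsey_step c (T k).1 (T k).2).choose_spec.1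
  have hTsucc : ∀ k, (T (k+1)).1 = {n | n ∈ (T k).1 ∧ a k < n ∧ c (a k) n = d k} := fun k => rfl
  have hsub : ∀ k, (T (k+1)).1 ⊆ (T k).1 := by
    intro k n hn; rw [hTsucc] at hn; exact hn.1
  have hchain : ∀ k l, k ≤ l → (T l).1 ⊆ (T k).1 := by
    intro k l hkl
    induction l with
    | zero => have : k = 0 := by omega
              subst this; exact fun n hn => hn
    | succ l ih =>
      rcases Nat.lt_or_ge k (l+1) with h | h
      · exact fun n hn => ih (by omega) (hsub l hn)
      · have : k = l + 1 := by omega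
        subst this; exact fun n hn => hn
  have hkey : ∀ k l, k < l → a k < a l ∧ c (a k) (a l) = d k := by
    intro k l hkl
    have : a l ∈ (T (k+1)).1 := hchain (k+1) l hkl (hmem l)
    rw [hTsucc] at this
    exact ⟨this.2.1, this.2.2⟩
  obtain ⟨e, he⟩ := pigeon_set (S := Set.univ) Set.infinite_univ d
  have heinf : {k | d k = e}.Infinite := by
    convert he using 1; ext k; simp
  let g : ℕ → ℕ := fun i => a (Nat.nth (fun k => d k = e) i)
  refine ⟨g, ?_, e, ?_⟩
  · intro i j hij
    exact (hkey _ _ ((Nat.nth_strictMono heinf) hij)).1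
  · intro i j hij
    have h1 := (hkey _ _ ((Nat.nth_strictMono heinf) hij)).2
    have h2 : d (Nat.nth (fun k => d k = e) i) = e := Nat.nth_mem_of_infinite heinf i
    rw [h1, h2]






variable {C Q : Type}

/-- Slice of an infinite word: positions `a, a+1, ..., b-1`. -/
def sliceW (t : ℕ → C) (a b : ℕ) : List C := (List.range (b - a)).map fun i => t (a + i)

@[simp] lemma sliceW_length (t : ℕ → C) (a b : ℕ) : (sliceW t a b).length = b - a := by
  simp [sliceW]

lemma sliceW_getElem (t : ℕ → C) (a b i : ℕ) (h : i < (sliceW t a b).length) :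
    (sliceW t a b)[i] = t (a + i) := by
  simp [sliceW]

lemma sliceW_append (t : ℕ → C) {a b c : ℕ} (hab : a ≤ b) (hbc : b ≤ c) :
    sliceW t a b ++ sliceW t b c = sliceW t a c := by
  apply List.ext_getElem
  · simp; omega
  · intro i h1 h2
    by_cases h : i < (sliceW t a b).length
    · rw [List.getElem_append_left h, sliceW_getElem, sliceW_getElem]
    · rw [List.getElem_append_right (by omega), sliceW_getElem, sliceW_getElem]
      simp only [sliceW_length] at h ⊢
      congr 1
      omega

lemma sliceW_congr {t t' : ℕ → C} {a b : ℕ} (h : ∀ i, a ≤ i → i < b → t i = t' i) :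
    sliceW t a b = sliceW t' a b := by
  apply List.ext_getElem (by simp)
  intro i h1 h2
  rw [sliceW_getElem, sliceW_getElem]
  exact h _ (by omega) (by simp at h1; omega)

section Runs

variable (Δ acc : Q → C → Q → Prop)

def FinRun (q : Q) (u : List C) (q' : Q) : Prop :=
  ∃ r : ℕ → Q, r 0 = q ∧ r u.length = q' ∧ ∀ i (h : i < u.length), Δ (r i) (u[i]) (r (i+1))

def FinRunAcc (q : Q) (u : List C) (q' : Q) : Prop :=
  ∃ r : ℕ → Q, r 0 = q ∧ r u.length = q' ∧ (∀ i (h : i < u.length), Δ (r i) (u[i]) (r (i+1)))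
    ∧ ∃ i, ∃ h : i < u.length, acc (r i) (u[i]) (r (i+1))

/-- The transition profile of a finite word. -/
def Prof (u : List C) : (Q → Q → Prop) × (Q → Q → Prop) :=
  (fun q q' => FinRun Δ q u q', fun q q' => FinRunAcc Δ acc q u q')

/-- Composition of profiles. -/
def pComp (P R : (Q → Q → Prop) × (Q → Q → Prop)) : (Q → Q → Prop) × (Q → Q → Prop) :=
  (fun q q' => ∃ p, P.1 q p ∧ R.1 p q',
   fun q q' => ∃ p, (P.2 q p ∧ R.1 p q') ∨ (P.1 q p ∧ R.2 p q'))

lemma finRun_append {q q' : Q} {u v : List C} :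
    FinRun Δ q (u ++ v) q' ↔ ∃ p, FinRun Δ q u p ∧ FinRun Δ p v q' := by
  constructor
  · rintro ⟨r, h0, hl, hΔ⟩
    refine ⟨r u.length, ⟨r, h0, rfl, ?_⟩, ⟨fun i => r (u.length + i), rfl, ?_, ?_⟩⟩
    · intro i h
      have := hΔ i (by simp; omega)
      rwa [List.getElem_append_left h] at this
    · rw [← hl]; congr 1; simp
    · intro i h
      have h2 : u.length + i < (u ++ v).length := by simp; omega
      have := hΔ (u.length + i) h2
      rw [List.getElem_append_right (by omega)] at this
      simpa [Nat.add_sub_cancel_left, Nat.add_assoc] using this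
  · rintro ⟨p, ⟨r1, h10, h1l, h1Δ⟩, ⟨r2, h20, h2l, h2Δ⟩⟩
    refine ⟨fun i => if i < u.length then r1 i else r2 (i - u.length), ?_, ?_, ?_⟩
    · by_cases h : 0 < u.length <;> simp [h]
      · exact h10
      · rw [show u.length = 0 by omega] at h1l; rw [h20, ← h1l, h10]
    · have h : ¬ (u ++ v).length < u.length := by simp
      simp only [h, if_false]
      rw [← h2l]; congr 1; simp
    · intro i h
      simp only [List.length_append] at h
      by_cases hi : i < u.length
      · have hg : (u ++ v)[i] = u[i] := List.getElem_append_left hi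
        by_cases hi1 : i + 1 < u.length
        · simpa [hi, hi1, hg] using h1Δ i hi
        · have : i + 1 = u.length := by omega
          have e2 : r2 (i + 1 - u.length) = r1 (i + 1) := by
            rw [this]; simp [h20, ← h1l]
          have e2' : r2 0 = r1 (i + 1) := by rw [h20, ← h1l, this]
          simpa [hi, hi1, hg, e2, e2'] using h1Δ i hi
      · have hg : (u ++ v)[i] = v[i - u.length] := by
          rw [List.getElem_append_right (by omega)]
        have hi1 : ¬ i + 1 < u.length := by omega
        have e3 : i + 1 - u.length = (i - u.length) + 1 := by omega
        simpa [hi, hi1, hg, e3] using h2Δ (i - u.length) (by omega)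

lemma finRunAcc_append {q q' : Q} {u v : List C} :
    FinRunAcc Δ acc q (u ++ v) q' ↔
      ∃ p, (FinRunAcc Δ acc q u p ∧ FinRun Δ p v q') ∨
        (FinRun Δ q u p ∧ FinRunAcc Δ acc p v q') := by
  constructor
  · rintro ⟨r, h0, hl, hΔ, i, hi, hacc⟩
    have hparts := (finRun_append Δ (q := q) (q' := q') (u := u) (v := v)).mp ⟨r, h0, hl, hΔ⟩
    obtain ⟨p, ⟨r1', hp1⟩, hp2⟩ := hparts
    -- we rebuild with explicit runs as in finRun_append to place the acc index
    refine ⟨r u.length, ?_⟩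
    simp only [List.length_append] at hi
    by_cases hiu : i < u.length
    · left
      constructor
      · refine ⟨r, h0, rfl, ?_, i, hiu, ?_⟩
        · intro j hj
          have := hΔ j (by simp; omega)
          rwa [List.getElem_append_left hj] at this
        · rwa [List.getElem_append_left hiu] at hacc
      · refine ⟨fun j => r (u.length + j), rfl, ?_, ?_⟩
        · rw [← hl]; congr 1; simp
        · intro j hj
          have := hΔ (u.length + j) (by simp; omega)
          rw [List.getElem_append_right (by omega)] at this
          simpa [Nat.add_sub_cancel_left, Nat.add_assoc] using this
    · right
      constructor
      · refine ⟨r, h0, rfl, ?_⟩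
        intro j hj
        have := hΔ j (by simp; omega)
        rwa [List.getElem_append_left hj] at this
      · refine ⟨fun j => r (u.length + j), rfl, ?_, ?_, i - u.length, by omega, ?_⟩
        · rw [← hl]; congr 1; simp
        · intro j hj
          have := hΔ (u.length + j) (by simp; omega)
          rw [List.getElem_append_right (by omega)] at this
          simpa [Nat.add_sub_cancel_left, Nat.add_assoc] using this
        · show acc (r (u.length + (i - u.length))) _ (r (u.length + (i - u.length + 1)))
          rw [show u.length + (i - u.length) = i by omega,
            show u.length + (i - u.length + 1) = i + 1 by omega]
          rwa [List.getElem_append_right (by omega)] at hacc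
  · rintro ⟨p, hcase⟩
    have key : ∀ (r1 r2 : ℕ → Q), r1 0 = q → r1 u.length = p →
        (∀ i (h : i < u.length), Δ (r1 i) (u[i]) (r1 (i+1))) →
        r2 0 = p → r2 v.length = q' →
        (∀ i (h : i < v.length), Δ (r2 i) (v[i]) (r2 (i+1))) →
        ∃ r : ℕ → Q, r 0 = q ∧ r (u ++ v).length = q' ∧
          (∀ i (h : i < (u ++ v).length), Δ (r i) ((u ++ v)[i]) (r (i+1))) ∧
          (∀ i ≤ u.length, r i = r1 i) ∧ (∀ j, r (u.length + j) = r2 j) := by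
      intro r1 r2 h10 h1l h1Δ h20 h2l h2Δ
      refine ⟨fun i => if i < u.length then r1 i else r2 (i - u.length), ?_, ?_, ?_, ?_, ?_⟩
      · by_cases h : 0 < u.length <;> simp [h]
        · exact h10
        · rw [show u.length = 0 by omega] at h1l; rw [h20, ← h1l, h10]
      · have h : ¬ (u ++ v).length < u.length := by simp
        simp only [h, if_false]
        rw [← h2l]; congr 1; simp
      · intro i h
        simp only [List.length_append] at h
        by_cases hi : i < u.length
        · have hg : (u ++ v)[i] = u[i] := List.getElem_append_left hi
          by_cases hi1 : i + 1 < u.length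
          · simpa [hi, hi1, hg] using h1Δ i hi
          · have hieq : i + 1 = u.length := by omega
            have e2 : r2 (i + 1 - u.length) = r1 (i + 1) := by
              rw [hieq]; simp [h20, ← h1l]
            have e2' : r2 0 = r1 (i + 1) := by rw [h20, ← h1l, hieq]
            simpa [hi, hi1, hg, e2, e2'] using h1Δ i hi
        · have hg : (u ++ v)[i] = v[i - u.length] := by
            rw [List.getElem_append_right (by omega)]
          have hi1 : ¬ i + 1 < u.length := by omega
          have e3 : i + 1 - u.length = (i - u.length) + 1 := by omega
          simpa [hi, hi1, hg, e3] using h2Δ (i - u.length) (by omega)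
      · intro i hle
        by_cases h : i < u.length
        · simp [h]
        · have : i = u.length := by omega
          simp [h, this, h20, ← h1l]
      · intro j
        by_cases h : j = 0
        · simp [h, h20, ← h1l]
        · have hlt : ¬ u.length + j < u.length := by omega
          simp [hlt]
    rcases hcase with ⟨⟨r1, h10, h1l, h1Δ, i, hi, hacc⟩, ⟨r2, h20, h2l, h2Δ⟩⟩ |
      ⟨⟨r1, h10, h1l, h1Δ⟩, ⟨r2, h20, h2l, h2Δ, i, hi, hacc⟩⟩
    · obtain ⟨r, hr0, hrl, hrΔ, hfeq, hgeq⟩ := key r1 r2 h10 h1l h1Δ h20 h2l h2Δ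
      refine ⟨r, hr0, hrl, hrΔ, i, by simp; omega, ?_⟩
      rw [hfeq i (by omega), hfeq (i+1) (by omega), List.getElem_append_left hi]
      exact hacc
    · obtain ⟨r, hr0, hrl, hrΔ, hfeq, hgeq⟩ := key r1 r2 h10 h1l h1Δ h20 h2l h2Δ
      refine ⟨r, hr0, hrl, hrΔ, u.length + i, by simp; omega, ?_⟩
      rw [show u.length + i + 1 = u.length + (i + 1) by omega, hgeq i, hgeq (i+1),
        List.getElem_append_right (by omega)]
      show acc (r2 i) (v[u.length + i - u.length]'_) (r2 (i+1))
      have e : u.length + i - u.length = i := by omega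
      simp only [e]
      exact hacc

lemma prof_append (u v : List C) :
    Prof Δ acc (u ++ v) = pComp (Prof Δ acc u) (Prof Δ acc v) := by
  unfold Prof pComp
  refine Prod.ext ?_ ?_ <;> funext q q' <;> apply propext <;> simp only
  · exact finRun_append Δ
  · exact finRunAcc_append Δ acc

/-- Restriction of an infinite run to a slice. -/
lemma finRun_restrict {t : ℕ → C} {ρ : ℕ → Q} (hΔ : ∀ n, Δ (ρ n) (t n) (ρ (n+1)))
    {a b : ℕ} (hab : a ≤ b) : FinRun Δ (ρ a) (sliceW t a b) (ρ b) := by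
  refine ⟨fun i => ρ (a + i), rfl, by rw [sliceW_length]; exact congrArg ρ (by omega), ?_⟩
  intro i h
  rw [sliceW_getElem]
  have := hΔ (a + i)
  rwa [show a + i + 1 = a + (i+1) by omega] at this

lemma finRunAcc_restrict {t : ℕ → C} {ρ : ℕ → Q} (hΔ : ∀ n, Δ (ρ n) (t n) (ρ (n+1)))
    {a b p : ℕ} (hap : a ≤ p) (hpb : p < b) (hacc : acc (ρ p) (t p) (ρ (p+1))) :
    FinRunAcc Δ acc (ρ a) (sliceW t a b) (ρ b) := by
  refine ⟨fun i => ρ (a + i), rfl, by rw [sliceW_length]; exact congrArg ρ (by omega), ?_, p - a,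
    by rw [sliceW_length]; omega, ?_⟩
  · intro i h
    rw [sliceW_getElem]
    have := hΔ (a + i)
    rwa [show a + i + 1 = a + (i+1) by omega] at this
  · have e1 : a + (p - a) = p := by omega
    have e2 : a + (p - a + 1) = p + 1 := by omega
    beta_reduce
    rw [sliceW_getElem, e1, e2]
    exact hacc

/-- Gluing finite runs along blocks into an infinite accepting run. -/
lemma glue_runs {t : ℕ → C} {M : ℕ → ℕ} (hM : StrictMono M) (hM0 : M 0 = 0) {σ : ℕ → Q}
    (H0 : FinRun Δ (σ 0) (sliceW t (M 0) (M 1)) (σ 1))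
    (Hk : ∀ k, 1 ≤ k → FinRunAcc Δ acc (σ k) (sliceW t (M k) (M (k+1))) (σ (k+1))) :
    ∃ ρ : ℕ → Q, ρ 0 = σ 0 ∧ (∀ n, Δ (ρ n) (t n) (ρ (n+1))) ∧
      ∀ K, ∃ n ≥ K, acc (ρ n) (t n) (ρ (n+1)) := by
  classical
  have hMle : ∀ k, k ≤ M k := fun k => by
    induction k with
    | zero => omega
    | succ k ih => have := hM (show k < k + 1 by omega); omega
  -- per-block runs
  have hruns : ∀ k, ∃ r : ℕ → Q, r 0 = σ k ∧ r (M (k+1) - M k) = σ (k+1) ∧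
      (∀ i, i < M (k+1) - M k → Δ (r i) (t (M k + i)) (r (i+1))) ∧
      (1 ≤ k → ∃ i, i < M (k+1) - M k ∧ acc (r i) (t (M k + i)) (r (i+1))) := by
    intro k
    rcases Nat.eq_zero_or_pos k with rfl | hk
    · obtain ⟨r, h0, hl, hΔ⟩ := H0
      refine ⟨r, h0, by simpa using hl, ?_, by omega⟩
      intro i hi
      have := hΔ i (by simpa using hi)
      rwa [sliceW_getElem] at this
    · obtain ⟨r, h0, hl, hΔ, i, hi, hacc⟩ := Hk k hk
      refine ⟨r, h0, by simpa using hl, ?_, ?_⟩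
      · intro j hj
        have := hΔ j (by simpa using hj)
        rwa [sliceW_getElem] at this
      · intro _
        refine ⟨i, by simpa using hi, ?_⟩
        rwa [sliceW_getElem] at hacc
  choose r hr0 hrl hrΔ hracc using hruns
  -- block index
  let bi : ℕ → ℕ := fun j => Nat.findGreatest (fun k => M k ≤ j) j
  have hbi1 : ∀ j, M (bi j) ≤ j := by
    intro j
    exact Nat.findGreatest_spec (P := fun k => M k ≤ j) (m := 0) (by omega) (by show M 0 ≤ j; omega)
  have hbi2 : ∀ j, j < M (bi j + 1) := by
    intro j
    by_contra h
    push_neg at h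
    have h1 : bi j + 1 ≤ j := le_trans (hMle _) h
    have h2 : bi j + 1 ≤ bi j := Nat.le_findGreatest (P := fun k => M k ≤ j) h1 h
    omega
  have hbi_eq : ∀ j k, M k ≤ j → j < M (k+1) → bi j = k := by
    intro j k h1 h2
    have hk1 : k ≤ bi j := Nat.le_findGreatest (P := fun k => M k ≤ j) (le_trans (hMle k) h1) h1
    have hk2 : bi j ≤ k := by
      by_contra h
      push_neg at h
      have : M (k+1) ≤ M (bi j) := hM.monotone h
      have := hbi1 j
      omega
    omega
  let ρ : ℕ → Q := fun j => r (bi j) (j - M (bi j))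
  -- step lemma
  have hstep : ∀ j, ρ (j+1) = r (bi j) (j - M (bi j) + 1) := by
    intro j
    have h1 := hbi1 j
    have h2 := hbi2 j
    by_cases h : j + 1 < M (bi j + 1)
    · have : bi (j+1) = bi j := hbi_eq (j+1) (bi j) (by omega) h
      show r (bi (j+1)) (j + 1 - M (bi (j+1))) = _
      rw [this]
      congr 1
      omega
    · have hj1 : j + 1 = M (bi j + 1) := by omega
      have hbieq : bi (j+1) = bi j + 1 := by
        refine hbi_eq (j+1) (bi j + 1) (by omega) ?_
        have := hM (show bi j + 1 < bi j + 1 + 1 by omega)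
        omega
      show r (bi (j+1)) (j + 1 - M (bi (j+1))) = _
      rw [hbieq, hj1]
      simp only [Nat.sub_self]
      rw [hr0]
      have := hrl (bi j)
      rw [← this]
      congr 1
      omega
  have hρΔ : ∀ n, Δ (ρ n) (t n) (ρ (n+1)) := by
    intro j
    rw [hstep j]
    have h1 := hbi1 j
    have h2 := hbi2 j
    have := hrΔ (bi j) (j - M (bi j)) (by omega)
    rwa [show M (bi j) + (j - M (bi j)) = j by omega] at this
  refine ⟨ρ, ?_, hρΔ, ?_⟩
  · show r (bi 0) (0 - M (bi 0)) = σ 0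
    have : bi 0 = 0 := hbi_eq 0 0 (by omega) (by have := hM (show 0 < 0 + 1 by omega); omega)
    rw [this, hM0]
    exact hr0 0
  · intro K
    obtain ⟨i, hi, hacc⟩ := hracc (K+1) (by omega)
    refine ⟨M (K+1) + i, by have := hMle (K+1); omega, ?_⟩
    have hbieq : bi (M (K+1) + i) = K + 1 := by
      refine hbi_eq _ _ (by omega) (by omega)
    have hρj : ρ (M (K+1) + i) = r (K+1) i := by
      show r (bi (M (K+1) + i)) _ = _
      rw [hbieq]
      congr 1
      omega
    have hρj1 : ρ (M (K+1) + i + 1) = r (K+1) (i+1) := by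
      rw [hstep]
      rw [hbieq]
      congr 1
      omega
    rw [hρj, hρj1]
    exact hacc

/-- The key Ramsey-factorization equivalence: acceptance only depends on the
factorization profiles. -/
lemma accept_iff_good (init : Set Q) [Finite Q] (t : ℕ → C) (N : ℕ → ℕ)
    (hN : StrictMono N) (hN0 : 0 < N 0)
    (m e : (Q → Q → Prop) × (Q → Q → Prop))
    (Hm : ∀ k, Prof Δ acc (sliceW t 0 (N k)) = m)
    (He : ∀ k l, k < l → Prof Δ acc (sliceW t (N k) (N l)) = e) :
    NBAAccepts init Δ acc t ↔ ∃ q0 ∈ init, ∃ q, m.1 q0 q ∧ e.2 q q := by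
  constructor
  · rintro ⟨ρ, hinit, hΔ, hacc⟩
    obtain ⟨q, hq⟩ := pigeon_set (S := Set.univ) Set.infinite_univ (fun k => ρ (N k))
    have hqinf : {k | ρ (N k) = q}.Infinite := by
      convert hq using 1; ext k; simp
    obtain ⟨k₁, hk₁⟩ := hqinf.nonempty
    obtain ⟨p, hp, haccp⟩ := hacc (N k₁)
    obtain ⟨l₁, hl₁mem, hl₁gt⟩ : ∃ l₁ ∈ {k | ρ (N k) = q}, max k₁ p < l₁ := by
      have := (hqinf.diff (Set.finite_Iic (max k₁ p))).nonempty
      obtain ⟨l, hl⟩ := this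
      exact ⟨l, hl.1, by simpa using hl.2⟩
    have hNle : ∀ k, k ≤ N k := fun k => by
      induction k with
      | zero => omega
      | succ k ih => have := hN (show k < k + 1 by omega); omega
    refine ⟨ρ 0, hinit, q, ?_, ?_⟩
    · have := finRun_restrict Δ hΔ (a := 0) (b := N k₁) (by omega)
      rw [← Hm k₁]
      rw [hk₁] at this
      exact this
    · have hlt : N k₁ < N l₁ := hN (by omega)
      have hple : p < N l₁ := by have := hNle l₁; omega
      have := finRunAcc_restrict Δ acc hΔ (a := N k₁) (b := N l₁) hp hple haccp
      rw [hk₁, hl₁mem] at this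
      rw [← He k₁ l₁ (by omega)]
      exact this
  · rintro ⟨q0, hq0, q, hm, he⟩
    set M : ℕ → ℕ := fun k => match k with | 0 => 0 | (k+1) => N k with hMdef
    have hM : StrictMono M := by
      apply strictMono_nat_of_lt_succ
      intro k
      match k with
      | 0 => exact hN0
      | (k+1) => exact hN (Nat.lt_succ_self k)
    set σ : ℕ → Q := fun k => if k = 0 then q0 else q with hσdef
    have H0 : FinRun Δ (σ 0) (sliceW t (M 0) (M 1)) (σ 1) := by
      show FinRun Δ q0 (sliceW t 0 (N 0)) q
      rw [← Hm 0] at hm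
      exact hm
    have Hk : ∀ k, 1 ≤ k → FinRunAcc Δ acc (σ k) (sliceW t (M k) (M (k+1))) (σ (k+1)) := by
      intro k hk
      match k, hk with
      | (k+1), _ =>
        show FinRunAcc Δ acc q (sliceW t (N k) (N (k+1))) q
        rw [← He k (k+1) (Nat.lt_succ_self k)] at he
        exact he
    obtain ⟨ρ, hρ0, hρΔ, hρacc⟩ := glue_runs Δ acc hM rfl H0 Hk
    exact ⟨ρ, by rw [hρ0]; simpa [hσdef] using hq0, hρΔ, hρacc⟩

end Runs


/-- Periodic infinite word given by a nonempty finite word. -/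
def perW {C : Type} (x : List C) (hx : 0 < x.length) : ℕ → C :=
  fun n => x.get ⟨n % x.length, Nat.mod_lt _ hx⟩

lemma sliceW_extWord_high {C : Type} (w : List C) (s : ℕ → C) (a b : ℕ) :
    sliceW (extWord w s) (w.length + a) (w.length + b) = sliceW s a b := by
  apply List.ext_getElem (by simp only [sliceW_length]; omega)
  intro i h1 h2
  rw [sliceW_getElem, sliceW_getElem]
  show extWord w s (w.length + a + i) = s (a + i)
  unfold extWord
  rw [dif_neg (by omega)]
  congr 1
  omega

theorem pump {C : Type} {W : Set (ℕ → C)} (hreg : OmegaRegular W) (w₁ w₂ : List C) (s : ℕ → C)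
    (h1 : extWord w₁ s ∈ W) (h2 : extWord w₂ s ∉ W) :
    ∃ (u x : List C) (hu : 0 < u.length) (hx : 0 < x.length),
      extWord w₁ (extWord u (perW x hx)) ∈ W ∧ extWord w₂ (extWord u (perW x hx)) ∉ W := by
  classical
  obtain ⟨Q, fQ, init, Δ, acc, hsub, hW⟩ := hreg
  subst hW
  have : Finite Q := Finite.of_fintype Q
  set t₁ := extWord w₁ s with ht₁
  set t₂ := extWord w₂ s with ht₂
  set c : ℕ → ℕ → ((Q → Q → Prop) × (Q → Q → Prop)) × ((Q → Q → Prop) × (Q → Q → Prop)) ×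
      ((Q → Q → Prop) × (Q → Q → Prop)) := fun i j =>
    (Prof Δ acc (sliceW s i j), Prof Δ acc (sliceW t₁ 0 (w₁.length + i)),
      Prof Δ acc (sliceW t₂ 0 (w₂.length + i))) with hc
  obtain ⟨g, hg, E, hE⟩ := ramsey_pairs c
  set n : ℕ → ℕ := fun k => g (k + 1) with hn
  have hnm : StrictMono n := fun a b hab => hg (by omega)
  have hn0 : 1 ≤ n 0 := by
    show 1 ≤ g (0 + 1)
    have := hg (show 0 < 0 + 1 by omega)
    omega
  set e := E.1 with he
  set m₁ := E.2.1 with hm₁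
  set m₂ := E.2.2 with hm₂
  have He_s : ∀ k l, k < l → Prof Δ acc (sliceW s (n k) (n l)) = e :=
    fun k l h => congrArg Prod.fst (hE (k+1) (l+1) (by omega))
  have Hm1 : ∀ k, Prof Δ acc (sliceW t₁ 0 (w₁.length + n k)) = m₁ :=
    fun k => congrArg (fun z => z.2.1) (hE (k+1) (k+2) (by omega))
  have Hm2 : ∀ k, Prof Δ acc (sliceW t₂ 0 (w₂.length + n k)) = m₂ :=
    fun k => congrArg (fun z => z.2.2) (hE (k+1) (k+2) (by omega))
  set u := sliceW s 0 (n 0) with hu'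
  set x := sliceW s (n 0) (n 1) with hx'
  have hul : u.length = n 0 := by simp [hu']
  have hxl : x.length = n 1 - n 0 := by simp [hx']
  have hu : 0 < u.length := by omega
  have hx : 0 < x.length := by
    have := hnm (show 0 < 1 by omega)
    omega
  set s' := extWord u (perW x hx) with hs'
  have hxe : Prof Δ acc x = e := He_s 0 1 (by omega)
  have hee : pComp e e = e := by
    have hsplit := sliceW_append s (le_of_lt (hnm (show 0 < 1 by omega)))
      (le_of_lt (hnm (show 1 < 2 by omega)))
    have := congrArg (Prof Δ acc) hsplit
    rw [prof_append, He_s 0 1 (by omega), He_s 1 2 (by omega), He_s 0 2 (by omega)] at this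
    exact this
  -- u and x agree with s on an initial segment
  have hs'low : ∀ j, j < n 0 → s' j = s j := by
    intro j hj
    show extWord u (perW x hx) j = s j
    unfold extWord
    rw [dif_pos (by omega)]
    simp only [List.get_eq_getElem, hu']
    rw [sliceW_getElem, Nat.zero_add]
  -- main helper, applied to w₁ and w₂
  have helper : ∀ (w : List C) (mm : (Q → Q → Prop) × (Q → Q → Prop)),
      (∀ k, Prof Δ acc (sliceW (extWord w s) 0 (w.length + n k)) = mm) →
      (NBAAccepts init Δ acc (extWord w s) ↔ NBAAccepts init Δ acc (extWord w s')) := by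
    intro w mm Hm
    set t := extWord w s with ht
    set t' := extWord w s' with ht'
    have hme : pComp mm e = mm := by
      have hsplit := sliceW_append t (show 0 ≤ w.length + n 0 by omega)
        (show w.length + n 0 ≤ w.length + n 1 by have := hnm (show 0 < 1 by omega); omega)
      have h3 := congrArg (Prof Δ acc) hsplit
      rw [prof_append, Hm 0, Hm 1] at h3
      rw [sliceW_extWord_high w s (n 0) (n 1), ← hx', hxe] at h3
      exact h3
    have A := accept_iff_good Δ acc init t (fun k => w.length + n k)
      (fun a b hab => by beta_reduce; have := hnm hab; omega) (by omega) mm e Hm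
      (by
        intro k l hkl
        show Prof Δ acc (sliceW t (w.length + n k) (w.length + n l)) = e
        rw [ht, sliceW_extWord_high]
        exact He_s k l hkl)
    -- periodic slices of t'
    have hperiodic : ∀ k, sliceW t' (w.length + u.length + k * x.length)
        (w.length + u.length + (k+1) * x.length) = x := by
      intro k
      apply List.ext_getElem
      · simp only [sliceW_length]
        have : (k+1) * x.length = k * x.length + x.length := by ring
        omega
      · intro i h1 h2
        rw [sliceW_getElem]
        show extWord w s' (w.length + u.length + k * x.length + i) = x[i]
        unfold extWord
        rw [dif_neg (by omega)]
        have e1 : w.length + u.length + k * x.length + i - w.length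
            = u.length + (k * x.length + i) := by omega
        rw [e1]
        show extWord u (perW x hx) (u.length + (k * x.length + i)) = x[i]
        unfold extWord
        rw [dif_neg (by omega)]
        have e2 : u.length + (k * x.length + i) - u.length = k * x.length + i := by omega
        rw [e2]
        show x[(k * x.length + i) % x.length]'_ = x[i]
        have e3 : (k * x.length + i) % x.length = i := by
          rw [Nat.add_comm (k * x.length) i, Nat.add_mul_mod_self_right]
          exact Nat.mod_eq_of_lt (by omega)
        simp only [e3]
    have hN'm : StrictMono (fun k => w.length + u.length + k * x.length) := by
      intro a b hab
      simp only
      have := (Nat.mul_lt_mul_right hx).mpr hab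
      omega
  -- prefix profiles of t'
    have Hm' : ∀ k, Prof Δ acc (sliceW t' 0 (w.length + u.length + k * x.length)) = mm := by
      intro k
      induction k with
      | zero =>
        have hagree : sliceW t' 0 (w.length + u.length + 0 * x.length)
            = sliceW t 0 (w.length + n 0) := by
          have e0 : w.length + u.length + 0 * x.length = w.length + n 0 := by omega
          rw [e0]
          apply sliceW_congr
          intro i _ hi
          show extWord w s' i = extWord w s i
          unfold extWord
          by_cases hiw : i < w.length
          · rw [dif_pos hiw, dif_pos hiw]
          · rw [dif_neg hiw, dif_neg hiw]
            exact hs'low _ (by omega)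
        rw [hagree, Hm 0]
      | succ k ih =>
        have hsplit := sliceW_append t' (show 0 ≤ w.length + u.length + k * x.length by omega)
          (le_of_lt (hN'm (show k < k + 1 by omega)))
        have h3 := congrArg (Prof Δ acc) hsplit
        rw [prof_append, ih, hperiodic k] at h3
        rw [hxe, hme] at h3
        exact h3.symm
    have He' : ∀ k l, k < l → Prof Δ acc (sliceW t' (w.length + u.length + k * x.length)
        (w.length + u.length + l * x.length)) = e := by
      have key : ∀ d k, Prof Δ acc (sliceW t' (w.length + u.length + k * x.length)
          (w.length + u.length + (k + d + 1) * x.length)) = e := by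
        intro d
        induction d with
        | zero => intro k; rw [show k + 0 + 1 = k + 1 by omega, hperiodic k, hxe]
        | succ d ih =>
          intro k
          have hsplit := sliceW_append t' (le_of_lt (hN'm (show k < k + d + 1 by omega)))
            (le_of_lt (hN'm (show k + d + 1 < k + (d+1) + 1 by omega)))
          have h3 := congrArg (Prof Δ acc) hsplit
          rw [prof_append, ih k] at h3
          rw [show k + (d+1) + 1 = (k + d + 1) + 1 by omega, hperiodic (k + d + 1), hxe] at h3
          rw [hee] at h3
          rw [show k + (d+1) + 1 = (k + d + 1) + 1 by omega]
          exact h3.symm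
      intro k l hkl
      have := key (l - k - 1) k
      rwa [show k + (l - k - 1) + 1 = l by omega] at this
    have B := accept_iff_good Δ acc init t' (fun k => w.length + u.length + k * x.length)
      hN'm (by omega) mm e Hm' He'
    rw [A, B]
  have res1 := (helper w₁ m₁ Hm1).mp h1
  have res2 := fun hcon => h2 ((helper w₂ m₂ Hm2).mpr hcon)
  exact ⟨u, x, hu, hx, res1, res2⟩

/-! ### Arena construction -/

section ArenaSec

variable {C : Type}

/-- Position after `j` steps along a lasso of length `L` looping back to `q`. -/
def cNext (L q k : ℕ) : ℕ := if k + 1 < L then k + 1 else q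

def cPos (L q : ℕ) : ℕ → ℕ := fun j => Nat.rec 0 (fun _ k => cNext L q k) j

@[simp] lemma cPos_zero (L q : ℕ) : cPos L q 0 = 0 := rfl

lemma cPos_succ (L q j : ℕ) : cPos L q (j+1) = cNext L q (cPos L q j) := rfl

lemma cNext_lt (L q k : ℕ) (hq : q < L) : cNext L q k < L := by
  unfold cNext; split <;> omega

lemma cPos_lt (L q : ℕ) (hq : q < L) : ∀ j, cPos L q j < L := by
  intro j
  induction j with
  | zero => show 0 < L; omega
  | succ j ih => rw [cPos_succ]; exact cNext_lt L q _ hq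

lemma cPos_low (L q : ℕ) (hq : q < L) : ∀ j, j ≤ q → cPos L q j = j := by
  intro j
  induction j with
  | zero => intro _; rfl
  | succ j ih =>
    intro hj
    rw [cPos_succ, ih (by omega)]
    unfold cNext
    rw [if_pos (by omega)]

lemma cPos_high (L q : ℕ) (hq : q < L) : ∀ j, q ≤ j → cPos L q j = q + (j - q) % (L - q) := by
  intro j
  induction j with
  | zero =>
    intro hj
    have : q = 0 := by omega
    subst this
    simp
  | succ j ih =>
    intro hj
    rcases Nat.lt_or_ge j q with hlt | hge
    · -- j + 1 = q
      have hq' : j + 1 = q := by omega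
      rw [cPos_low L q hq (j+1) (by omega), hq']
      simp
    · set r := L - q with hr
      have hrpos : 0 < r := by omega
      set m := (j - q) % r with hm
      have hmlt : m < r := Nat.mod_lt _ hrpos
      have hd := Nat.div_add_mod (j - q) r
      have hmod : (j + 1 - q) % r = (m + 1) % r := by
        rw [show j + 1 - q = (m + 1) + r * ((j - q) / r) by omega, Nat.add_mul_mod_self_left]
      rw [cPos_succ, ih hge]
      unfold cNext
      rcases Nat.lt_or_ge (m + 1) r with h1 | h1
      · rw [if_pos (by omega), hmod, Nat.mod_eq_of_lt h1]
        omega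
      · have hm1 : m + 1 = r := by omega
        rw [if_neg (by omega), hmod, hm1, Nat.mod_self]
        omega

/-- Lasso colors match the ultimately periodic word. -/
lemma getD_cPos (u x : List C) (c₀ : C) (hx : 0 < x.length) (j : ℕ) :
    (u ++ x).getD (cPos (u ++ x).length u.length j) c₀ = extWord u (perW x hx) j := by
  set L := (u ++ x).length with hL
  have hLlen : L = u.length + x.length := by simp [hL]
  have hq : u.length < L := by omega
  rcases Nat.lt_or_ge j u.length with hlt | hge
  · rw [cPos_low L u.length hq j (by omega)]
    rw [List.getD_eq_getElem _ _ (by omega), List.getElem_append_left hlt]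
    show _ = extWord u (perW x hx) j
    unfold extWord
    rw [dif_pos hlt]
    simp [List.get_eq_getElem]
  · rw [cPos_high L u.length hq j hge]
    have hr : L - u.length = x.length := by omega
    set m := (j - u.length) % (L - u.length) with hm
    have hmlt : m < x.length := by rw [hm, hr]; exact Nat.mod_lt _ hx
    rw [List.getD_eq_getElem _ _ (by omega),
      List.getElem_append_right (by omega : u.length ≤ u.length + m)]
    show x[u.length + m - u.length]'_ = _
    have e1 : u.length + m - u.length = m := by omega
    simp only [e1]
    unfold extWord
    rw [dif_neg (by omega)]
    show _ = x.get ⟨(j - u.length) % x.length, _⟩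
    simp only [List.get_eq_getElem]
    congr 1
    rw [hm, hr]

variable (w₁ w₂ y₁ y₂ : List C) (q₁ q₂ : ℕ) (c₀ : C)

/-- The arena vertex set: two chains, a branch vertex `T`, and two lassos. -/
def ArV : Type := ((Fin w₁.length ⊕ Fin w₂.length) ⊕ Unit) ⊕ (Fin y₁.length ⊕ Fin y₂.length)

instance : Fintype (ArV w₁ w₂ y₁ y₂) := by unfold ArV; infer_instance

instance : DecidableEq (ArV w₁ w₂ y₁ y₂) := by
  unfold ArV
  infer_instance

attribute [reducible] ArV

def vT : ArV w₁ w₂ y₁ y₂ := Sum.inl (Sum.inr ())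

variable (hq₁ : q₁ < y₁.length) (hq₂ : q₂ < y₂.length)

/-- Successor function choosing lasso 1 at `T`. -/
def fAr : ArV w₁ w₂ y₁ y₂ → C × ArV w₁ w₂ y₁ y₂
  | .inl (.inl (.inl k)) => (w₁.getD k c₀,
      if h : (k:ℕ)+1 < w₁.length then .inl (.inl (.inl ⟨k+1, h⟩)) else vT w₁ w₂ y₁ y₂)
  | .inl (.inl (.inr k)) => (w₂.getD k c₀,
      if h : (k:ℕ)+1 < w₂.length then .inl (.inl (.inr ⟨k+1, h⟩)) else vT w₁ w₂ y₁ y₂)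
  | .inl (.inr _) => (y₁.getD 0 c₀, .inr (.inl ⟨cPos y₁.length q₁ 1, cPos_lt _ _ hq₁ 1⟩))
  | .inr (.inl k) => (y₁.getD k c₀, .inr (.inl ⟨cNext y₁.length q₁ k, cNext_lt _ _ _ hq₁⟩))
  | .inr (.inr k) => (y₂.getD k c₀, .inr (.inr ⟨cNext y₂.length q₂ k, cNext_lt _ _ _ hq₂⟩))

/-- Successor function choosing lasso 2 at `T`. -/
def gAr : ArV w₁ w₂ y₁ y₂ → C × ArV w₁ w₂ y₁ y₂ := fun v =>
  if v = vT w₁ w₂ y₁ y₂ then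
    (y₂.getD 0 c₀, .inr (.inr ⟨cPos y₂.length q₂ 1, cPos_lt _ _ hq₂ 1⟩))
  else fAr w₁ w₂ y₁ y₂ q₁ q₂ c₀ hq₁ hq₂ v

end ArenaSec

/-! ### Iterated plays -/

section Iter

variable {C : Type} {α : Type}

def itV (h : α → C × α) (v : α) : ℕ → α := fun n => Nat.rec v (fun _ w => (h w).2) n

def itC (h : α → C × α) (v : α) (n : ℕ) : C := (h (itV h v n)).1

@[simp] lemma itV_zero (h : α → C × α) (v : α) : itV h v 0 = v := rfl

lemma itV_succ (h : α → C × α) (v : α) (n : ℕ) : itV h v (n+1) = (h (itV h v n)).2 := rfl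

lemma itV_add (h : α → C × α) (v : α) (a b : ℕ) : itV h v (a + b) = itV h (itV h v a) b := by
  induction b with
  | zero => rfl
  | succ b ih => rw [show a + (b+1) = (a+b)+1 by omega, itV_succ, ih, itV_succ]

lemma consistent_eq (σ : Strat C α) (h : α → C × α)
    (hσ : ∀ hh vv, σ hh vv = h vv) {p : ℕ → α} {col : ℕ → C} {v : α}
    (hc : ConsistentPlay (fun _ => True) σ p col) (h0 : p 0 = v) :
    (∀ n, p n = itV h v n) ∧ (∀ n, col n = itC h v n) := by
  have hp : ∀ n, p n = itV h v n := by
    intro n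
    induction n with
    | zero => exact h0
    | succ n ih =>
      have hcn := hc n trivial
      rw [hσ] at hcn
      have h2 := congrArg Prod.snd hcn
      simp only at h2
      rw [itV_succ, ← ih]
      exact h2
  refine ⟨hp, ?_⟩
  intro n
  have hcn := hc n trivial
  rw [hσ] at hcn
  have h1 := congrArg Prod.fst hcn
  simp only at h1
  rw [h1, hp n]
  rfl

lemma winningFrom_to_mem {W : Set (ℕ → C)} {E : Set (α × C × α)} {σ : Strat C α} {v : α}
    (h : α → C × α) (hσ : ∀ hh vv, σ hh vv = h vv)
    (hEdge : ∀ u, (u, h u) ∈ E)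
    (hwin : WinningFrom W E (fun _ => True) σ v) : itC h v ∈ W := by
  apply hwin (itV h v) (itC h v)
  · intro n
    exact hEdge (itV h v n)
  · rfl
  · intro n _
    rw [hσ]
    rfl

lemma mem_to_winningFrom {W : Set (ℕ → C)} {E : Set (α × C × α)} {v : α}
    (h : α → C × α) (hmem : itC h v ∈ W) :
    WinningFrom W E (fun _ => True) (fun _ vv => h vv) v := by
  intro p col _ h0 hcons
  have hcol := (consistent_eq (fun _ vv => h vv) h (fun _ _ => rfl) hcons h0).2
  have : col = itC h v := funext hcol
  rw [this]
  exact hmem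

end Iter

section ArenaPlay

variable {C : Type} (w₁ w₂ y₁ y₂ : List C) (q₁ q₂ : ℕ) (c₀ : C)
  (hq₁ : q₁ < y₁.length) (hq₂ : q₂ < y₂.length)

/-- Vertex on chain 1 after `n` steps. -/
def chV₁ (n : ℕ) : ArV w₁ w₂ y₁ y₂ :=
  if h : n < w₁.length then .inl (.inl (.inl ⟨n, h⟩)) else vT w₁ w₂ y₁ y₂

def chV₂ (n : ℕ) : ArV w₁ w₂ y₁ y₂ :=
  if h : n < w₂.length then .inl (.inl (.inr ⟨n, h⟩)) else vT w₁ w₂ y₁ y₂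

/-- Vertex on lasso A after `j` steps from `T`. -/
def tlA (j : ℕ) : ArV w₁ w₂ y₁ y₂ :=
  if j = 0 then vT w₁ w₂ y₁ y₂ else .inr (.inl ⟨cPos y₁.length q₁ j, cPos_lt _ _ hq₁ j⟩)

def tlB (j : ℕ) : ArV w₁ w₂ y₁ y₂ :=
  if j = 0 then vT w₁ w₂ y₁ y₂ else .inr (.inr ⟨cPos y₂.length q₂ j, cPos_lt _ _ hq₂ j⟩)

lemma chain₁ (hh : ArV w₁ w₂ y₁ y₂ → C × ArV w₁ w₂ y₁ y₂)
    (hch : ∀ v, hh (.inl (.inl (.inl v))) = fAr w₁ w₂ y₁ y₂ q₁ q₂ c₀ hq₁ hq₂ (.inl (.inl (.inl v)))) :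
    (∀ n, n ≤ w₁.length → itV hh (chV₁ w₁ w₂ y₁ y₂ 0) n = chV₁ w₁ w₂ y₁ y₂ n) ∧
    (∀ n, n < w₁.length → itC hh (chV₁ w₁ w₂ y₁ y₂ 0) n = w₁.getD n c₀) := by
  have hv : ∀ n, n ≤ w₁.length → itV hh (chV₁ w₁ w₂ y₁ y₂ 0) n = chV₁ w₁ w₂ y₁ y₂ n := by
    intro n
    induction n with
    | zero => intro _; rfl
    | succ n ih =>
      intro hn
      rw [itV_succ, ih (by omega)]
      have hlt : n < w₁.length := by omega
      rw [chV₁, dif_pos hlt, hch, fAr]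
      by_cases h2 : n + 1 < w₁.length
      · simp only [h2, dif_pos]
        rw [chV₁, dif_pos h2]
      · rw [dif_neg h2, chV₁, dif_neg h2]
  refine ⟨hv, ?_⟩
  intro n hn
  rw [itC, hv n (by omega), chV₁, dif_pos hn, hch, fAr]

lemma chain₂ (hh : ArV w₁ w₂ y₁ y₂ → C × ArV w₁ w₂ y₁ y₂)
    (hch : ∀ v, hh (.inl (.inl (.inr v))) = fAr w₁ w₂ y₁ y₂ q₁ q₂ c₀ hq₁ hq₂ (.inl (.inl (.inr v)))) :
    (∀ n, n ≤ w₂.length → itV hh (chV₂ w₁ w₂ y₁ y₂ 0) n = chV₂ w₁ w₂ y₁ y₂ n) ∧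
    (∀ n, n < w₂.length → itC hh (chV₂ w₁ w₂ y₁ y₂ 0) n = w₂.getD n c₀) := by
  have hv : ∀ n, n ≤ w₂.length → itV hh (chV₂ w₁ w₂ y₁ y₂ 0) n = chV₂ w₁ w₂ y₁ y₂ n := by
    intro n
    induction n with
    | zero => intro _; rfl
    | succ n ih =>
      intro hn
      rw [itV_succ, ih (by omega)]
      have hlt : n < w₂.length := by omega
      rw [chV₂, dif_pos hlt, hch, fAr]
      by_cases h2 : n + 1 < w₂.length
      · simp only [h2, dif_pos]
        rw [chV₂, dif_pos h2]
      · rw [dif_neg h2, chV₂, dif_neg h2]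
  refine ⟨hv, ?_⟩
  intro n hn
  rw [itC, hv n (by omega), chV₂, dif_pos hn, hch, fAr]

lemma tailA_lem :
    (∀ j, itV (fAr w₁ w₂ y₁ y₂ q₁ q₂ c₀ hq₁ hq₂) (vT w₁ w₂ y₁ y₂) j = tlA w₁ w₂ y₁ y₂ q₁ hq₁ j) ∧
    (∀ j, itC (fAr w₁ w₂ y₁ y₂ q₁ q₂ c₀ hq₁ hq₂) (vT w₁ w₂ y₁ y₂) j
      = y₁.getD (cPos y₁.length q₁ j) c₀) := by
  have hv : ∀ j, itV (fAr w₁ w₂ y₁ y₂ q₁ q₂ c₀ hq₁ hq₂) (vT w₁ w₂ y₁ y₂) j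
      = tlA w₁ w₂ y₁ y₂ q₁ hq₁ j := by
    intro j
    induction j with
    | zero => rfl
    | succ j ih =>
      rw [itV_succ, ih]
      by_cases h : j = 0
      · subst h
        rw [tlA, if_pos rfl, vT, fAr, tlA, if_neg (by omega)]
      · rw [tlA, if_neg h, fAr, tlA, if_neg (by omega)]
        congr 1
  refine ⟨hv, ?_⟩
  intro j
  rw [itC, hv j]
  by_cases h : j = 0
  · subst h
    rw [tlA, if_pos rfl, vT, fAr]
    rfl
  · rw [tlA, if_neg h, fAr]

lemma gAr_ne_T (v : ArV w₁ w₂ y₁ y₂) (hv : v ≠ vT w₁ w₂ y₁ y₂) :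
    gAr w₁ w₂ y₁ y₂ q₁ q₂ c₀ hq₁ hq₂ v = fAr w₁ w₂ y₁ y₂ q₁ q₂ c₀ hq₁ hq₂ v := by
  rw [gAr, if_neg hv]

lemma tailB_lem :
    (∀ j, itV (gAr w₁ w₂ y₁ y₂ q₁ q₂ c₀ hq₁ hq₂) (vT w₁ w₂ y₁ y₂) j = tlB w₁ w₂ y₁ y₂ q₂ hq₂ j) ∧
    (∀ j, itC (gAr w₁ w₂ y₁ y₂ q₁ q₂ c₀ hq₁ hq₂) (vT w₁ w₂ y₁ y₂) j
      = y₂.getD (cPos y₂.length q₂ j) c₀) := by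
  have hv : ∀ j, itV (gAr w₁ w₂ y₁ y₂ q₁ q₂ c₀ hq₁ hq₂) (vT w₁ w₂ y₁ y₂) j
      = tlB w₁ w₂ y₁ y₂ q₂ hq₂ j := by
    intro j
    induction j with
    | zero => rfl
    | succ j ih =>
      rw [itV_succ, ih]
      by_cases h : j = 0
      · subst h
        rw [tlB, if_pos rfl, gAr, if_pos rfl, tlB, if_neg (by omega)]
      · rw [tlB, if_neg h, gAr_ne_T _ _ _ _ _ _ _ _ _ _ (by rw [vT]; simp), fAr,
          tlB, if_neg (by omega)]
        congr 1
  refine ⟨hv, ?_⟩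
  intro j
  rw [itC, hv j]
  by_cases h : j = 0
  · subst h
    rw [tlB, if_pos rfl, gAr, if_pos rfl]
    rfl
  · rw [tlB, if_neg h, gAr_ne_T _ _ _ _ _ _ _ _ _ _ (by rw [vT]; simp), fAr]

end ArenaPlay

/-- Assembling the colors of a full play: chain then tail. -/
lemma fullColors {C : Type} {α : Type} (hh : α → C × α) (w : List C) (c₀ : C)
    (v0 t0 : α) (s : ℕ → C)
    (hT : itV hh v0 w.length = t0)
    (hcolChain : ∀ n, n < w.length → itC hh v0 n = w.getD n c₀)
    (hcolTail : ∀ j, itC hh t0 j = s j) :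
    ∀ n, itC hh v0 n = extWord w s n := by
  intro n
  rcases Nat.lt_or_ge n w.length with h | h
  · rw [hcolChain n h]
    unfold extWord
    rw [dif_pos h, List.getD_eq_getElem _ _ h]
    simp [List.get_eq_getElem]
  · have hn : n = w.length + (n - w.length) := by omega
    rw [hn]
    show (hh (itV hh v0 (w.length + (n - w.length)))).1 = _
    rw [itV_add, hT]
    show itC hh t0 (n - w.length) = _
    rw [hcolTail]
    unfold extWord
    rw [dif_neg (by omega)]
    congr 1
    omega

theorem arena_contra {C : Type} (W : Set (ℕ → C)) (hpos : HalfPosFinOnePlayer W)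
    (w₁ w₂ u₁ x₁ u₂ x₂ : List C) (hx₁ : 0 < x₁.length) (hx₂ : 0 < x₂.length)
    (H1 : extWord w₁ (extWord u₁ (perW x₁ hx₁)) ∈ W)
    (H2 : extWord w₂ (extWord u₁ (perW x₁ hx₁)) ∉ W)
    (H3 : extWord w₂ (extWord u₂ (perW x₂ hx₂)) ∈ W)
    (H4 : extWord w₁ (extWord u₂ (perW x₂ hx₂)) ∉ W) : False := by
  classical
  set y₁ := u₁ ++ x₁ with hy₁
  set y₂ := u₂ ++ x₂ with hy₂
  set c₀ : C := x₁.get ⟨0, hx₁⟩ with hc₀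
  have hq₁ : u₁.length < y₁.length := by rw [hy₁, List.length_append]; omega
  have hq₂ : u₂.length < y₂.length := by rw [hy₂, List.length_append]; omega
  set f' := fAr w₁ w₂ y₁ y₂ u₁.length u₂.length c₀ hq₁ hq₂ with hf'
  set g' := gAr w₁ w₂ y₁ y₂ u₁.length u₂.length c₀ hq₁ hq₂ with hg'
  set E : Set (ArV w₁ w₂ y₁ y₂ × C × ArV w₁ w₂ y₁ y₂) :=
    {z | z.2 = f' z.1 ∨ z.2 = g' z.1} with hE
  have hnb : ∀ v, ∃ c v', (v, c, v') ∈ E := by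
    intro v
    exact ⟨(f' v).1, (f' v).2, Or.inl rfl⟩
  obtain ⟨σ, hval, hposi, hopt⟩ := hpos (ArV w₁ w₂ y₁ y₂) E hnb
  set h : ArV w₁ w₂ y₁ y₂ → C × ArV w₁ w₂ y₁ y₂ := fun v => σ [] v with hht
  have hσh : ∀ hh vv, σ hh vv = h vv := fun hh vv => hposi hh [] vv
  have hval' : ∀ v, h v = f' v ∨ h v = g' v := fun v => hval [] v trivial
  -- chain and tail computations
  have hchT : chV₁ w₁ w₂ y₁ y₂ w₁.length = vT w₁ w₂ y₁ y₂ := by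
    rw [chV₁, dif_neg (by omega)]
  have hchT2 : chV₂ w₁ w₂ y₁ y₂ w₂.length = vT w₁ w₂ y₁ y₂ := by
    rw [chV₂, dif_neg (by omega)]
  have ch1f := chain₁ w₁ w₂ y₁ y₂ u₁.length u₂.length c₀ hq₁ hq₂ f' (fun v => rfl)
  have ch2f := chain₂ w₁ w₂ y₁ y₂ u₁.length u₂.length c₀ hq₁ hq₂ f' (fun v => rfl)
  have ch1g := chain₁ w₁ w₂ y₁ y₂ u₁.length u₂.length c₀ hq₁ hq₂ g'
    (fun v => gAr_ne_T _ _ _ _ _ _ _ _ _ _ (by rw [vT]; intro hc; injection hc with h2; injection h2))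
  have ch2g := chain₂ w₁ w₂ y₁ y₂ u₁.length u₂.length c₀ hq₁ hq₂ g'
    (fun v => gAr_ne_T _ _ _ _ _ _ _ _ _ _ (by rw [vT]; intro hc; injection hc with h2; injection h2))
  have tA := tailA_lem w₁ w₂ y₁ y₂ u₁.length u₂.length c₀ hq₁ hq₂
  have tB := tailB_lem w₁ w₂ y₁ y₂ u₁.length u₂.length c₀ hq₁ hq₂
  have tailColA : ∀ j, itC f' (vT w₁ w₂ y₁ y₂) j = extWord u₁ (perW x₁ hx₁) j := by
    intro j
    rw [tA.2 j]
    exact getD_cPos u₁ x₁ c₀ hx₁ j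
  have tailColB : ∀ j, itC g' (vT w₁ w₂ y₁ y₂) j = extWord u₂ (perW x₂ hx₂) j := by
    intro j
    rw [tB.2 j]
    exact getD_cPos u₂ x₂ c₀ hx₂ j
  have F1 : ∀ n, itC f' (chV₁ w₁ w₂ y₁ y₂ 0) n = extWord w₁ (extWord u₁ (perW x₁ hx₁)) n :=
    fullColors f' w₁ c₀ _ _ _ (by rw [ch1f.1 w₁.length le_rfl, hchT]) ch1f.2 tailColA
  have F3 : ∀ n, itC f' (chV₂ w₁ w₂ y₁ y₂ 0) n = extWord w₂ (extWord u₁ (perW x₁ hx₁)) n :=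
    fullColors f' w₂ c₀ _ _ _ (by rw [ch2f.1 w₂.length le_rfl, hchT2]) ch2f.2 tailColA
  have F4 : ∀ n, itC g' (chV₁ w₁ w₂ y₁ y₂ 0) n = extWord w₁ (extWord u₂ (perW x₂ hx₂)) n :=
    fullColors g' w₁ c₀ _ _ _ (by rw [ch1g.1 w₁.length le_rfl, hchT]) ch1g.2 tailColB
  have F2 : ∀ n, itC g' (chV₂ w₁ w₂ y₁ y₂ 0) n = extWord w₂ (extWord u₂ (perW x₂ hx₂)) n :=
    fullColors g' w₂ c₀ _ _ _ (by rw [ch2g.1 w₂.length le_rfl, hchT2]) ch2g.2 tailColB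
  -- the single positional strategy wins from both starting vertices
  have win1 : WinningFrom W E (fun _ => True) σ (chV₁ w₁ w₂ y₁ y₂ 0) := by
    apply hopt
    refine ⟨fun _ vv => f' vv, fun hh v _ => Or.inl rfl, ?_⟩
    apply mem_to_winningFrom
    rw [funext F1]
    exact H1
  have win2 : WinningFrom W E (fun _ => True) σ (chV₂ w₁ w₂ y₁ y₂ 0) := by
    apply hopt
    refine ⟨fun _ vv => g' vv, fun hh v _ => Or.inr rfl, ?_⟩
    apply mem_to_winningFrom
    rw [funext F2]
    exact H3
  have m1 : itC h (chV₁ w₁ w₂ y₁ y₂ 0) ∈ W :=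
    winningFrom_to_mem h hσh (fun u => hval' u) win1
  have m2 : itC h (chV₂ w₁ w₂ y₁ y₂ 0) ∈ W :=
    winningFrom_to_mem h hσh (fun u => hval' u) win2
  rcases hval' (vT w₁ w₂ y₁ y₂) with hT | hT
  · have hhf : h = f' := by
      funext v
      rcases hval' v with h1 | h1
      · exact h1
      · by_cases hv : v = vT w₁ w₂ y₁ y₂
        · rw [hv]
          exact hT
        · rw [h1, hg', hf']
          exact gAr_ne_T _ _ _ _ _ _ _ _ _ _ hv
    rw [hhf, funext F3] at m2
    exact H2 m2
  · have hhg : h = g' := by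
      funext v
      rcases hval' v with h1 | h1
      · by_cases hv : v = vT w₁ w₂ y₁ y₂
        · rw [hv]
          exact hT
        · rw [h1, hg', hf']
          exact (gAr_ne_T _ _ _ _ _ _ _ _ _ _ hv).symm
      · exact h1
    rw [hhg, funext F4] at m1
    exact H4 m1

end Stmt7Aux

/-- an ω-regular objective that is half-positional over finite one-player
arenas has a total prefix preorder. -/
theorem stmt7 {C : Type} (W : Set (ℕ → C))
    (hreg : OmegaRegular W) (hpos : HalfPosFinOnePlayer W) :
    ∀ w₁ w₂ : List C, winCont W w₁ ⊆ winCont W w₂ ∨ winCont W w₂ ⊆ winCont W w₁ := by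
  intro w₁ w₂
  by_contra hcon
  push_neg at hcon
  obtain ⟨h12, h21⟩ := hcon
  rw [Set.not_subset] at h12 h21
  obtain ⟨s₁, hs₁p, hs₁n⟩ := h12
  obtain ⟨s₂, hs₂p, hs₂n⟩ := h21
  obtain ⟨u₁, x₁, hu₁, hx₁, P1, P2⟩ := Stmt7Aux.pump hreg w₁ w₂ s₁ hs₁p hs₁n
  obtain ⟨u₂, x₂, hu₂, hx₂, P3, P4⟩ := Stmt7Aux.pump hreg w₂ w₁ s₂ hs₂p hs₂n
  exact Stmt7Aux.arena_contra W hpos w₁ w₂ u₁ x₁ u₂ x₂ hx₁ hx₂ P1 P2 P3 P4
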